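/- Let μₙ be an eigenvalue of L(q,α,β), let φ(·,λ) for λ ∈ ℝ be the solution of −y'' + q y = λ y on [0,π] with φ(0,λ) = sin α, φ'(0,λ) = −cos α, let ψₙ be the solution with ψₙ(π) = sin β, ψₙ'(π) = −cos β, and suppose φ(·,μₙ) = cₙ·ψₙ on [0,π] with a nonzero constant cₙ. Let Φ(λ) = φ(π,λ)·cos β + φ'(π,λ)·sin β and assume Φ is differentiable at μₙ with derivative Φ̇(μₙ). Then the norming constant aₙ = ∫₀^π φ(x,μₙ)² dx satisfies aₙ = −cₙ·Φ̇(μₙ). -/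

import Mathlib

open Real MeasureTheory Set

noncomputable section

/-- `y` (with derivative `y'`) solves `-y'' + Q y = μ y` on `[0, π]`:
`y` is differentiable with derivative `y'`, and
`y' x = y' 0 + ∫ t in 0..x, (Q t - μ) * y t` for all `x ∈ [0, π]`. -/
def IsSol (Q : ℝ → ℝ) (μ : ℝ) (y y' : ℝ → ℝ) : Prop :=
  (∀ x ∈ Set.Icc (0 : ℝ) π, HasDerivAt y (y' x) x) ∧
  (∀ x ∈ Set.Icc (0 : ℝ) π, y' x = y' 0 + ∫ t in (0 : ℝ)..x, (Q t - μ) * y t)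

/-- `μ` is an eigenvalue of the Sturm–Liouville problem `L(Q, γ, δ)`. -/
def IsEigenvalue (Q : ℝ → ℝ) (γ δ : ℝ) (μ : ℝ) : Prop :=
  ∃ y y' : ℝ → ℝ, IsSol Q μ y y' ∧
    (∃ x ∈ Set.Icc (0 : ℝ) π, y x ≠ 0) ∧
    y 0 * Real.cos γ + y' 0 * Real.sin γ = 0 ∧
    y π * Real.cos δ + y' π * Real.sin δ = 0

open intervalIntegral

lemma uIcc_eq : uIcc (0:ℝ) π = Icc 0 π := uIcc_of_le pi_pos.le

lemma sol_cont {Q : ℝ → ℝ} {μ : ℝ} {y y' : ℝ → ℝ} (h : IsSol Q μ y y') :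
    ContinuousOn y (Icc 0 π) :=
  fun x hx => ((h.1 x hx).continuousAt).continuousWithinAt

lemma sol_rhs_integrable {Q : ℝ → ℝ} (hQ : IntegrableOn Q (Set.Icc (0 : ℝ) π))
    {μ : ℝ} {y y' : ℝ → ℝ} (h : IsSol Q μ y y') :
    IntervalIntegrable (fun t => (Q t - μ) * y t) volume 0 π := by
  have hQi : IntervalIntegrable Q volume 0 π := by
    apply IntegrableOn.intervalIntegrable; rwa [uIcc_eq]
  have hyc : ContinuousOn y (uIcc 0 π) := by rw [uIcc_eq]; exact sol_cont h
  have h1 : IntervalIntegrable (fun t => Q t * y t) volume 0 π := hQi.mul_continuousOn hyc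
  have h2 : IntervalIntegrable (fun t => μ * y t) volume 0 π :=
    (continuousOn_const.mul hyc).intervalIntegrable
  have := h1.sub h2
  simpa [sub_mul] using this

lemma sol_cont' {Q : ℝ → ℝ} (hQ : IntegrableOn Q (Set.Icc (0 : ℝ) π))
    {μ : ℝ} {y y' : ℝ → ℝ} (h : IsSol Q μ y y') :
    ContinuousOn y' (Icc 0 π) := by
  have hi : IntegrableOn (fun t => (Q t - μ) * y t) (uIcc 0 π) volume := by
    rw [uIcc_eq]
    exact (intervalIntegrable_iff_integrableOn_Icc_of_le pi_pos.le).mp (sol_rhs_integrable hQ h)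
  have hc := continuousOn_primitive_interval (a := 0) (b := π) hi
  rw [uIcc_eq] at hc
  exact (continuousOn_const.add hc).congr h.2

/-- FTC for solutions. -/
lemma sol_ftc {Q : ℝ → ℝ} (hQ : IntegrableOn Q (Set.Icc (0 : ℝ) π))
    {μ : ℝ} {y y' : ℝ → ℝ} (h : IsSol Q μ y y') {x : ℝ} (hx : x ∈ Icc (0:ℝ) π) :
    ∫ t in (0:ℝ)..x, y' t = y x - y 0 := by
  apply intervalIntegral.integral_eq_sub_of_hasDerivAt
  · intro t ht
    apply h.1
    rw [uIcc_of_le hx.1] at ht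
    exact ⟨ht.1, ht.2.trans hx.2⟩
  · apply ((sol_cont' hQ h).mono ?_).intervalIntegrable
    rw [uIcc_of_le hx.1]
    exact Icc_subset_Icc le_rfl hx.2

/-- y' interval-integrable on subintervals of `[0,π]`. -/
lemma sol_rhs_integrable_sub {Q : ℝ → ℝ} (hQ : IntegrableOn Q (Set.Icc (0 : ℝ) π))
    {μ : ℝ} {y y' : ℝ → ℝ} (h : IsSol Q μ y y') {x : ℝ} (hx : x ∈ Icc (0:ℝ) π) :
    IntervalIntegrable (fun t => (Q t - μ) * y t) volume 0 x := by
  apply (sol_rhs_integrable hQ h).mono_set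
  rw [uIcc_of_le hx.1, uIcc_eq]
  exact Icc_subset_Icc le_rfl hx.2

end

lemma parts {a A g : ℝ → ℝ} (haA : ∀ x ∈ Icc (0:ℝ) π, HasDerivAt a (A x) x)
    (hA : ContinuousOn A (Icc 0 π)) (hg : IntegrableOn g (Icc (0:ℝ) π)) :
    ∫ x in (0:ℝ)..π, A x * ∫ t in (0:ℝ)..x, g t
      = ∫ t in (0:ℝ)..π, (a π - a t) * g t := by
  have hπ := pi_pos
  have hgIoc : IntegrableOn g (Ioc (0:ℝ) π) := hg.mono_set Ioc_subset_Icc_self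
  have hAIoc : IntegrableOn A (Ioc (0:ℝ) π) :=
    (hA.integrableOn_compact isCompact_Icc).mono_set Ioc_subset_Icc_self
  set f : ℝ → ℝ → ℝ := fun x t => A x * (Iic x).indicator g t with hf
  have huncurry : Function.uncurry f =
      ({p : ℝ × ℝ | p.2 ≤ p.1}).indicator (fun p => A p.1 * g p.2) := by
    funext p
    by_cases h : p.2 ≤ p.1 <;>
      simp [Function.uncurry, hf, indicator, h]
  have hint : Integrable (Function.uncurry f)
      ((volume.restrict (Ioc (0:ℝ) π)).prod (volume.restrict (Ioc (0:ℝ) π))) := by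
    rw [huncurry]
    exact (Integrable.mul_prod hAIoc hgIoc).indicator
      (measurableSet_le measurable_snd measurable_fst)
  have hswap := MeasureTheory.integral_integral_swap hint
  -- identify LHS
  have hL : (∫ x in Ioc (0:ℝ) π, ∫ t in Ioc (0:ℝ) π, f x t)
      = ∫ x in (0:ℝ)..π, A x * ∫ t in (0:ℝ)..x, g t := by
    rw [intervalIntegral.integral_of_le hπ.le]
    apply setIntegral_congr_fun measurableSet_Ioc
    intro x hx
    show (∫ t in Ioc (0:ℝ) π, f x t) = A x * ∫ t in (0:ℝ)..x, g t
    have : (∫ t in Ioc (0:ℝ) π, f x t) = A x * ∫ t in Ioc (0:ℝ) π, (Iic x).indicator g t := by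
      simp [hf, integral_const_mul]
    rw [this, intervalIntegral.integral_of_le hx.1.le,
      setIntegral_indicator measurableSet_Iic, Ioc_inter_Iic]
    rw [min_eq_right hx.2]
  -- identify RHS
  have hR : (∫ t in Ioc (0:ℝ) π, ∫ x in Ioc (0:ℝ) π, f x t)
      = ∫ t in (0:ℝ)..π, (a π - a t) * g t := by
    rw [intervalIntegral.integral_of_le hπ.le]
    apply setIntegral_congr_fun measurableSet_Ioc
    intro t ht
    show (∫ x in Ioc (0:ℝ) π, f x t) = (a π - a t) * g t
    have h1 : ∀ x, f x t = (Ici t).indicator (fun x => A x * g t) x := by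
      intro x
      by_cases h : t ≤ x <;> simp [hf, indicator, h]
    have h2 : Ioc (0:ℝ) π ∩ Ici t = Icc t π := by
      ext x
      simp only [mem_inter_iff, mem_Ioc, mem_Ici, mem_Icc]
      constructor
      · rintro ⟨⟨_, h2⟩, h3⟩; exact ⟨h3, h2⟩
      · rintro ⟨h1', h2⟩; exact ⟨⟨lt_of_lt_of_le ht.1 h1', h2⟩, h1'⟩
    have h3 : (∫ x in Icc t π, A x) = a π - a t := by
      rw [integral_Icc_eq_integral_Ioc, ← intervalIntegral.integral_of_le ht.2]
      apply intervalIntegral.integral_eq_sub_of_hasDerivAt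
      · intro x hx
        rw [uIcc_of_le ht.2] at hx
        exact haA x ⟨ht.1.le.trans hx.1, hx.2⟩
      · apply ((hA.mono (Icc_subset_Icc ht.1.le le_rfl)).mono ?_).intervalIntegrable
        rw [uIcc_of_le ht.2]
      
    calc (∫ x in Ioc (0:ℝ) π, f x t)
        = ∫ x in Ioc (0:ℝ) π, (Ici t).indicator (fun x => A x * g t) x := by
          simp_rw [h1]
      _ = ∫ x in Icc t π, A x * g t := by
          rw [setIntegral_indicator measurableSet_Ici, h2]
      _ = (a π - a t) * g t := by rw [integral_mul_const, h3]
  rw [← hL, ← hR, hswap]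

lemma green_one {Q : ℝ → ℝ} (hQ : IntegrableOn Q (Set.Icc (0 : ℝ) π))
    {lam mu : ℝ} {y y' z z' : ℝ → ℝ} (hy : IsSol Q lam y y') (hz : IsSol Q mu z z') :
    ∫ t in (0:ℝ)..π, y t * ((Q t - mu) * z t)
      = y π * (z' π - z' 0) - (∫ x in (0:ℝ)..π, y' x * z' x) + z' 0 * (y π - y 0) := by
  have hπ : π ∈ Icc (0:ℝ) π := ⟨pi_pos.le, le_rfl⟩
  set g : ℝ → ℝ := fun t => (Q t - mu) * z t with hgdef
  have hg_int : IntervalIntegrable g volume 0 π := sol_rhs_integrable hQ hz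
  have hg_icc : IntegrableOn g (Icc (0:ℝ) π) :=
    (intervalIntegrable_iff_integrableOn_Icc_of_le pi_pos.le).mp hg_int
  have hy' := sol_cont' hQ hy
  have hz' := sol_cont' hQ hz
  have e1 := parts (a := y) (A := y') (g := g) hy.1 hy' hg_icc
  -- rewrite LHS integrand of e1 using z'表示
  have e2 : (∫ x in (0:ℝ)..π, y' x * ∫ t in (0:ℝ)..x, g t)
      = ∫ x in (0:ℝ)..π, y' x * (z' x - z' 0) := by
    apply intervalIntegral.integral_congr
    intro x hx
    rw [uIcc_eq] at hx
    simp only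
    have hzx : (∫ t in (0:ℝ)..x, g t) = z' x - z' 0 := by rw [hz.2 x hx]; ring
    rw [hzx]
  have hy'z' : IntervalIntegrable (fun x => y' x * z' x) volume 0 π := by
    apply ContinuousOn.intervalIntegrable
    rw [uIcc_eq]; exact hy'.mul hz'
  have hy'i : IntervalIntegrable y' volume 0 π := by
    apply ContinuousOn.intervalIntegrable; rw [uIcc_eq]; exact hy'
  have e3 : (∫ x in (0:ℝ)..π, y' x * (z' x - z' 0))
      = (∫ x in (0:ℝ)..π, y' x * z' x) - z' 0 * (y π - y 0) := by
    have : (fun x => y' x * (z' x - z' 0)) = fun x => y' x * z' x - z' 0 * y' x := by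
      funext x; ring
    rw [this, intervalIntegral.integral_sub hy'z' (hy'i.const_mul _),
      intervalIntegral.integral_const_mul, sol_ftc hQ hy hπ]
  have hyg : IntervalIntegrable (fun t => y t * g t) volume 0 π := by
    apply hg_int.continuousOn_mul
    rw [uIcc_eq]; exact sol_cont hy
  have e4 : (∫ t in (0:ℝ)..π, (y π - y t) * g t)
      = y π * (∫ t in (0:ℝ)..π, g t) - ∫ t in (0:ℝ)..π, y t * g t := by
    have : (fun t => (y π - y t) * g t) = fun t => y π * g t - y t * g t := by
      funext t; ring
    rw [this, intervalIntegral.integral_sub (hg_int.const_mul _) hyg,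
      intervalIntegral.integral_const_mul]
  have e5 : (∫ t in (0:ℝ)..π, g t) = z' π - z' 0 := by
    have := hz.2 π hπ
    rw [this]; ring
  rw [e2, e3] at e1
  rw [e4, e5] at e1
  linarith [e1]

lemma lagrange {Q : ℝ → ℝ} (hQ : IntegrableOn Q (Set.Icc (0 : ℝ) π))
    {lam mu : ℝ} {y y' z z' : ℝ → ℝ} (hy : IsSol Q lam y y') (hz : IsSol Q mu z z') :
    (y π * z' π - y' π * z π) - (y 0 * z' 0 - y' 0 * z 0)
      = (lam - mu) * ∫ x in (0:ℝ)..π, y x * z x := by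
  have h1 := green_one hQ hy hz
  have h2 := green_one hQ hz hy
  have hsym : (∫ x in (0:ℝ)..π, z' x * y' x) = ∫ x in (0:ℝ)..π, y' x * z' x := by
    simp_rw [mul_comm]
  rw [hsym] at h2
  have e : (∫ t in (0:ℝ)..π, (lam - mu) * (y t * z t))
      = (∫ t in (0:ℝ)..π, y t * ((Q t - mu) * z t))
        - ∫ t in (0:ℝ)..π, z t * ((Q t - lam) * y t) := by
    rw [← intervalIntegral.integral_sub]
    · apply intervalIntegral.integral_congr
      intro x hx; simp only; ring
    · exact (sol_rhs_integrable hQ hz).continuousOn_mul (by rw [uIcc_eq]; exact sol_cont hy)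
    · exact (sol_rhs_integrable hQ hy).continuousOn_mul (by rw [uIcc_eq]; exact sol_cont hz)
  rw [intervalIntegral.integral_const_mul] at e
  rw [h1, h2] at e
  linarith [e]

lemma gronwall {κ : ℝ → ℝ} (hκ : IntegrableOn κ (Icc (0:ℝ) π))
    (hκ0 : ∀ t ∈ Icc (0:ℝ) π, 0 ≤ κ t) :
    ∃ D : ℝ, 0 < D ∧ ∀ (u : ℝ → ℝ) (C : ℝ), ContinuousOn u (Icc (0:ℝ) π) →
      (∀ x ∈ Icc (0:ℝ) π, 0 ≤ u x) →
      (∀ x ∈ Icc (0:ℝ) π, u x ≤ C + ∫ t in (0:ℝ)..x, κ t * u t) →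
      ∀ x ∈ Icc (0:ℝ) π, u x ≤ C * D := by
  have hπ := pi_pos
  have hκi : IntervalIntegrable κ volume 0 π := by
    apply IntegrableOn.intervalIntegrable; rwa [uIcc_of_le hπ.le]
  -- uniform continuity of the primitive
  have hKc : ContinuousOn (fun x => ∫ t in (0:ℝ)..x, κ t) (Icc (0:ℝ) π) := by
    have := intervalIntegral.continuousOn_primitive_interval (a := 0) (b := π) (f := κ)
      (by rwa [uIcc_of_le hπ.le])
    rwa [uIcc_of_le hπ.le] at this
  have hUC := isCompact_Icc.uniformContinuousOn_of_continuous hKc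
  rw [Metric.uniformContinuousOn_iff] at hUC
  obtain ⟨δ, hδ, hδ'⟩ := hUC (1/2) (by norm_num)
  obtain ⟨N, hN⟩ := exists_nat_gt (π / δ)
  have hN0 : 0 < (N:ℝ) := lt_trans (div_pos hπ hδ) hN
  have hmesh : π / N < δ := by
    rw [div_lt_iff₀ hN0]
    rw [div_lt_iff₀ hδ] at hN
    linarith
  set p : ℕ → ℝ := fun i => min ((i:ℝ) * (π / N)) π with hp
  have hp0 : p 0 = 0 := by simp [hp, hπ.le]
  have hpN : p N = π := by
    simp only [hp]
    have hNpi : (N:ℝ) * (π / N) = π := by field_simp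
    rw [hNpi, min_self]
  have hpmem : ∀ i, p i ∈ Icc (0:ℝ) π := by
    intro i
    refine ⟨le_min (by positivity) hπ.le, min_le_right _ _⟩
  have hpmono : ∀ i, p i ≤ p (i+1) := by
    intro i
    apply min_le_min _ le_rfl
    have : (0:ℝ) ≤ π / N := by positivity
    push_cast; nlinarith
  have hpstep : ∀ i, p (i+1) - p i < δ := by
    intro i
    have h1 : (0:ℝ) ≤ π / N := by positivity
    rcases le_total ((i:ℝ) * (π / N)) π with h | h
    · have : p i = (i:ℝ) * (π / N) := min_eq_left h
      have h2 : p (i+1) ≤ ((i:ℝ)+1) * (π / N) := by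
        simp only [hp]; push_cast; exact min_le_left _ _
      rw [this] at *
      nlinarith
    · have hi : p i = π := min_eq_right h
      have hi1 : p (i+1) = π := by
        apply min_eq_right
        refine le_trans h ?_
        have : (0:ℝ) ≤ π / N := h1
        push_cast; nlinarith
      rw [hi, hi1]; simpa using hδ
  -- increment of primitive
  have hinc : ∀ i, (∫ t in (p i)..(p (i+1)), κ t) ≤ 1/2 := by
    intro i
    have hsub : IntervalIntegrable κ volume (p i) (p (i+1)) := by
      apply hκi.mono_set
      rw [uIcc_of_le (hpmono i), uIcc_of_le hπ.le]
      exact Icc_subset_Icc (hpmem i).1 (hpmem (i+1)).2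
    have h1 : IntervalIntegrable κ volume 0 (p (i+1)) := by
      apply hκi.mono_set
      rw [uIcc_of_le (hpmem (i+1)).1, uIcc_of_le hπ.le]
      exact Icc_subset_Icc le_rfl (hpmem (i+1)).2
    have h2 : IntervalIntegrable κ volume 0 (p i) := by
      apply hκi.mono_set
      rw [uIcc_of_le (hpmem i).1, uIcc_of_le hπ.le]
      exact Icc_subset_Icc le_rfl (hpmem i).2
    have e : (∫ t in (p i)..(p (i+1)), κ t)
        = (∫ t in (0:ℝ)..(p (i+1)), κ t) - ∫ t in (0:ℝ)..(p i), κ t :=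
      (intervalIntegral.integral_interval_sub_left h1 h2).symm
    have hd := hδ' (p (i+1)) (hpmem (i+1)) (p i) (hpmem i) ?_
    · rw [e]
      have := abs_le.mp (le_of_lt hd)
      calc (∫ t in (0:ℝ)..(p (i+1)), κ t) - ∫ t in (0:ℝ)..(p i), κ t
          ≤ |(∫ t in (0:ℝ)..(p (i+1)), κ t) - ∫ t in (0:ℝ)..(p i), κ t| := le_abs_self _
        _ ≤ 1/2 := by
            rw [Real.dist_eq] at hd
            exact le_of_lt hd
    · rw [Real.dist_eq, abs_of_nonneg (by linarith [hpmono i])]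
      exact hpstep i
  -- total mass and growth constant
  obtain ⟨Ktot, hKdef⟩ : ∃ K : ℝ, K = (∫ t in (0:ℝ)..π, κ t) := ⟨_, rfl⟩
  have hKtot0 : 0 ≤ Ktot := by
    rw [hKdef]; exact intervalIntegral.integral_nonneg hπ.le hκ0
  set R := 2*Ktot + 2 with hRdef
  have hR2 : (2:ℝ) ≤ R := by linarith
  refine ⟨R^N, by positivity, ?_⟩
  intro u C hu hu0 hb
  have h0mem : (0:ℝ) ∈ Icc (0:ℝ) π := ⟨le_rfl, hπ.le⟩
  have hC0 : 0 ≤ C := by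
    have h1 := hb 0 h0mem
    have h2 := hu0 0 h0mem
    simp only [intervalIntegral.integral_same] at h1
    linarith
  have hκu : IntervalIntegrable (fun t => κ t * u t) volume 0 π := by
    apply hκi.mul_continuousOn
    rwa [uIcc_of_le hπ.le]
  have hsubκu : ∀ s t : ℝ, s ∈ Icc (0:ℝ) π → t ∈ Icc (0:ℝ) π → s ≤ t →
      IntervalIntegrable (fun r => κ r * u r) volume s t := by
    intro s t hs ht hst
    apply hκu.mono_set
    rw [uIcc_of_le hst, uIcc_of_le hπ.le]
    exact Icc_subset_Icc hs.1 ht.2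
  have hsubκ : ∀ s t : ℝ, s ∈ Icc (0:ℝ) π → t ∈ Icc (0:ℝ) π → s ≤ t →
      IntervalIntegrable κ volume s t := by
    intro s t hs ht hst
    apply hκi.mono_set
    rw [uIcc_of_le hst, uIcc_of_le hπ.le]
    exact Icc_subset_Icc hs.1 ht.2
  have claim : ∀ i : ℕ, ∀ x ∈ Icc (0:ℝ) (p i), u x ≤ C * R^i := by
    intro i
    induction i with
    | zero =>
      intro x hx
      rw [hp0] at hx
      have hx0 : x = 0 := le_antisymm hx.2 hx.1
      subst hx0
      have h1 := hb 0 h0mem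
      simp only [intervalIntegral.integral_same] at h1
      simpa using h1
    | succ i ih =>
      intro x hx
      rcases le_total x (p i) with hxp | hxp
      · exact le_trans (ih x ⟨hx.1, hxp⟩) (by
          have : R^i ≤ R^(i+1) := pow_le_pow_right₀ (by linarith) (Nat.le_succ i)
          nlinarith)
      · -- x in [p i, p (i+1)]
        have hJsub : Icc (p i) (p (i+1)) ⊆ Icc (0:ℝ) π :=
          Icc_subset_Icc (hpmem i).1 (hpmem (i+1)).2
        obtain ⟨z, hzJ, hz⟩ := isCompact_Icc.exists_isMaxOn
          (nonempty_Icc.mpr (hpmono i)) (hu.mono hJsub)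
        have hxJ : x ∈ Icc (p i) (p (i+1)) := ⟨hxp, hx.2⟩
        have hzIcc : z ∈ Icc (0:ℝ) π := hJsub hzJ
        refine le_trans (hz hxJ) ?_
        -- bound u z
        have hRi1 : (1:ℝ) ≤ R^i := one_le_pow₀ (by linarith)
        have hsplit : (∫ t in (0:ℝ)..z, κ t * u t)
            = (∫ t in (0:ℝ)..(p i), κ t * u t) + ∫ t in (p i)..z, κ t * u t :=
          (intervalIntegral.integral_add_adjacent_intervals
            (hsubκu 0 (p i) h0mem (hpmem i) (hpmem i).1)
            (hsubκu (p i) z (hpmem i) hzIcc hzJ.1)).symm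
        have hb1 : (∫ t in (0:ℝ)..(p i), κ t * u t) ≤ Ktot * (C * R^i) := by
          have s1 : (∫ t in (0:ℝ)..(p i), κ t * u t)
              ≤ ∫ t in (0:ℝ)..(p i), κ t * (C * R^i) := by
            apply intervalIntegral.integral_mono_on (hpmem i).1
              (hsubκu 0 (p i) h0mem (hpmem i) (hpmem i).1)
              ((hsubκ 0 (p i) h0mem (hpmem i) (hpmem i).1).mul_const _)
            intro t ht
            have htI : t ∈ Icc (0:ℝ) π := ⟨ht.1, ht.2.trans (hpmem i).2⟩
            exact mul_le_mul_of_nonneg_left (ih t ht) (hκ0 t htI)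
          have s2 : (∫ t in (0:ℝ)..(p i), κ t * (C * R^i))
              = (∫ t in (0:ℝ)..(p i), κ t) * (C * R^i) := by
            rw [intervalIntegral.integral_mul_const]
          have s3 : (∫ t in (0:ℝ)..(p i), κ t) ≤ Ktot := by
            have e := intervalIntegral.integral_interval_sub_left hκi
              (hsubκ 0 (p i) h0mem (hpmem i) (hpmem i).1)
            have pos : 0 ≤ ∫ t in (p i)..π, κ t := by
              apply intervalIntegral.integral_nonneg (hpmem i).2
              intro t ht
              exact hκ0 t ⟨(hpmem i).1.trans ht.1, ht.2⟩
            rw [← hKdef] at e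
            linarith
          calc (∫ t in (0:ℝ)..(p i), κ t * u t) ≤ _ := s1
            _ = _ := s2
            _ ≤ Ktot * (C * R^i) := by
                have hCR : 0 ≤ C * R^i := mul_nonneg hC0 (by positivity)
                nlinarith [s3]
        have hb2 : (∫ t in (p i)..z, κ t * u t) ≤ u z * (1/2) := by
          have huz0 : 0 ≤ u z := hu0 z hzIcc
          have s1 : (∫ t in (p i)..z, κ t * u t)
              ≤ ∫ t in (p i)..z, κ t * u z := by
            apply intervalIntegral.integral_mono_on hzJ.1
              (hsubκu (p i) z (hpmem i) hzIcc hzJ.1)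
              ((hsubκ (p i) z (hpmem i) hzIcc hzJ.1).mul_const _)
            intro t ht
            have htJ : t ∈ Icc (p i) (p (i+1)) := ⟨ht.1, ht.2.trans hzJ.2⟩
            exact mul_le_mul_of_nonneg_left (hz htJ) (hκ0 t (hJsub htJ))
          have s2 : (∫ t in (p i)..z, κ t * u z)
              = (∫ t in (p i)..z, κ t) * u z := intervalIntegral.integral_mul_const _ _
          have s3 : (∫ t in (p i)..z, κ t) ≤ 1/2 := by
            have e := intervalIntegral.integral_interval_sub_left
              (hsubκ (p i) (p (i+1)) (hpmem i) (hpmem (i+1)) (hpmono i))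
              (hsubκ (p i) z (hpmem i) hzIcc hzJ.1)
            have pos : 0 ≤ ∫ t in z..(p (i+1)), κ t := by
              apply intervalIntegral.integral_nonneg hzJ.2
              intro t ht
              exact hκ0 t ⟨hzIcc.1.trans ht.1, ht.2.trans (hpmem (i+1)).2⟩
            linarith [hinc i]
          calc (∫ t in (p i)..z, κ t * u t) ≤ _ := s1
            _ = _ := s2
            _ ≤ u z * (1/2) := by nlinarith [s3, huz0]
        have hbz := hb z hzIcc
        rw [hsplit] at hbz
        have huz : u z ≤ 2*C + 2*Ktot*(C*R^i) := by linarith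
        calc u z ≤ 2*C + 2*Ktot*(C*R^i) := huz
          _ ≤ C * R^(i+1) := by
              rw [pow_succ]
              have e1 : C * (R^i * R) = 2*Ktot*(C*R^i) + 2*(C*R^i) := by rw [hRdef]; ring
              nlinarith [hRi1, hC0, hKtot0]
  intro x hx
  rw [← hpN] at hx
  exact claim N x hx

lemma phi_lip {q : ℝ → ℝ} (hq : IntegrableOn q (Set.Icc (0 : ℝ) π))
    {μn : ℝ} {φ φ' : ℝ → ℝ → ℝ}
    (hsol : ∀ lam : ℝ, IsSol q lam (φ lam) (φ' lam))
    (h00 : ∀ lam : ℝ, φ lam 0 = φ μn 0)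
    (h00' : ∀ lam : ℝ, φ' lam 0 = φ' μn 0) :
    ∃ L : ℝ, 0 ≤ L ∧ ∀ lam : ℝ, |lam - μn| ≤ 1 →
      ∀ x ∈ Icc (0:ℝ) π, |φ lam x - φ μn x| ≤ L * |lam - μn| := by
  have hπ := pi_pos
  obtain ⟨M, hM⟩ := isCompact_Icc.exists_bound_of_continuousOn (sol_cont (hsol μn))
  simp only [Real.norm_eq_abs] at hM
  have hM0 : 0 ≤ M := le_trans (abs_nonneg _) (hM 0 ⟨le_rfl, hπ.le⟩)
  set κ₀ : ℝ → ℝ := fun t => |q t| + (|μn| + 1) with hκ₀def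
  set κ : ℝ → ℝ := fun t => π * κ₀ t with hκdef
  have hκ₀int : IntegrableOn κ₀ (Icc (0:ℝ) π) := by
    apply hq.abs.add
    exact (integrableOn_const_iff).mpr (Or.inr measure_Icc_lt_top)
  have hκint : IntegrableOn κ (Icc (0:ℝ) π) := hκ₀int.const_mul π
  have hκ0 : ∀ t ∈ Icc (0:ℝ) π, 0 ≤ κ t := by
    intro t _; simp only [hκdef, hκ₀def]; positivity
  obtain ⟨D, hD, hDp⟩ := gronwall hκint hκ0
  refine ⟨π^2 * M * D, by positivity, ?_⟩
  intro lam hlam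
  have hlamabs : |lam| ≤ |μn| + 1 := by
    calc |lam| = |μn + (lam - μn)| := by ring_nf
      _ ≤ |μn| + |lam - μn| := abs_add_le _ _
      _ ≤ |μn| + 1 := by linarith
  set w : ℝ → ℝ := fun t => φ lam t - φ μn t with hwdef
  set w' : ℝ → ℝ := fun t => φ' lam t - φ' μn t with hw'def
  have hwc : ContinuousOn w (Icc (0:ℝ) π) := (sol_cont (hsol lam)).sub (sol_cont (hsol μn))
  have hw'c : ContinuousOn w' (Icc (0:ℝ) π) :=
    (sol_cont' hq (hsol lam)).sub (sol_cont' hq (hsol μn))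
  -- FTC for w
  have hwftc : ∀ x ∈ Icc (0:ℝ) π, w x = ∫ t in (0:ℝ)..x, w' t := by
    intro x hx
    have h1 := sol_ftc hq (hsol lam) hx
    have h2 := sol_ftc hq (hsol μn) hx
    have hii : ∀ mu : ℝ, IntervalIntegrable (φ' mu) volume 0 x := by
      intro mu
      apply ((sol_cont' hq (hsol mu)).mono ?_).intervalIntegrable
      rw [uIcc_of_le hx.1]; exact Icc_subset_Icc le_rfl hx.2
    have : (∫ t in (0:ℝ)..x, w' t)
        = (∫ t in (0:ℝ)..x, φ' lam t) - ∫ t in (0:ℝ)..x, φ' μn t :=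
      intervalIntegral.integral_sub (hii lam) (hii μn)
    rw [this, h1, h2, hwdef]
    simp only [h00 lam]
    ring
  -- representation of w'
  set h : ℝ → ℝ := fun s => (q s - lam) * w s + (μn - lam) * φ μn s with hhdef
  have hfun : (fun s => (q s - lam) * φ lam s - (q s - μn) * φ μn s) = h := by
    funext s; simp only [hhdef, hwdef]; ring
  have hw'rep : ∀ t ∈ Icc (0:ℝ) π, w' t = ∫ s in (0:ℝ)..t, h s := by
    intro t ht
    have h1 := (hsol lam).2 t ht
    have h2 := (hsol μn).2 t ht
    have : w' t = (∫ s in (0:ℝ)..t, (q s - lam) * φ lam s)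
        - ∫ s in (0:ℝ)..t, (q s - μn) * φ μn s := by
      rw [hw'def]; simp only [h1, h2, h00' lam]; ring
    rw [this, ← intervalIntegral.integral_sub
      (sol_rhs_integrable_sub hq (hsol lam) ht)
      (sol_rhs_integrable_sub hq (hsol μn) ht)]
    simp_rw [hfun]
  have hh_int : ∀ t ∈ Icc (0:ℝ) π, IntervalIntegrable h volume 0 t := by
    intro t ht
    rw [← hfun]
    exact (sol_rhs_integrable_sub hq (hsol lam) ht).sub
      (sol_rhs_integrable_sub hq (hsol μn) ht)
  -- the function u
  set u : ℝ → ℝ := fun t => |w t| with hudef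
  have huc : ContinuousOn u (Icc (0:ℝ) π) := hwc.abs
  have hu0 : ∀ x ∈ Icc (0:ℝ) π, 0 ≤ u x := fun x _ => abs_nonneg _
  have hκ₀i : IntervalIntegrable κ₀ volume 0 π := by
    apply IntegrableOn.intervalIntegrable; rwa [uIcc_of_le hπ.le]
  have hκ₀u_int : IntervalIntegrable (fun s => κ₀ s * u s) volume 0 π :=
    hκ₀i.mul_continuousOn (by rw [uIcc_of_le hπ.le]; exact huc)
  set ε := |lam - μn| with hεdef
  have hε0 : 0 ≤ ε := abs_nonneg _
  have hκ₀0 : ∀ s, 0 ≤ κ₀ s := by intro s; simp only [hκ₀def]; positivity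
  have hκ₀u0 : ∀ s ∈ Icc (0:ℝ) π, 0 ≤ κ₀ s * u s := by
    intro s hs; exact mul_nonneg (hκ₀0 s) (abs_nonneg _)
  have hκ₀u_sub : ∀ t ∈ Icc (0:ℝ) π, IntervalIntegrable (fun s => κ₀ s * u s) volume 0 t := by
    intro t ht
    apply hκ₀u_int.mono_set
    rw [uIcc_of_le ht.1, uIcc_of_le hπ.le]
    exact Icc_subset_Icc le_rfl ht.2
  have hhb : ∀ s ∈ Icc (0:ℝ) π, |h s| ≤ κ₀ s * u s + ε * M := by
    intro s hs
    have h1 : |h s| ≤ |q s - lam| * |w s| + |μn - lam| * |φ μn s| := by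
      calc |h s| ≤ |(q s - lam) * w s| + |(μn - lam) * φ μn s| := abs_add_le _ _
        _ = |q s - lam| * |w s| + |μn - lam| * |φ μn s| := by rw [abs_mul, abs_mul]
    have h2 : |q s - lam| ≤ κ₀ s := by
      calc |q s - lam| ≤ |q s| + |lam| := abs_sub _ _
        _ ≤ κ₀ s := by simp only [hκ₀def]; linarith
    have h3 : |μn - lam| = ε := by rw [hεdef, abs_sub_comm]
    have h4 := mul_le_mul_of_nonneg_right h2 (abs_nonneg (w s))
    have h5 := mul_le_mul_of_nonneg_left (hM s hs) hε0
    rw [h3] at h1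
    simp only [hudef]
    linarith
  have hbound : ∀ x ∈ Icc (0:ℝ) π, u x ≤ (ε * π^2 * M) + ∫ t in (0:ℝ)..x, κ t * u t := by
    intro x hx
    have hIxsub : Icc (0:ℝ) x ⊆ Icc 0 π := Icc_subset_Icc le_rfl hx.2
    have hSnn : 0 ≤ ∫ s in (0:ℝ)..x, κ₀ s * u s :=
      intervalIntegral.integral_nonneg hx.1 (fun s hs => hκ₀u0 s (hIxsub hs))
    have hw'b : ∀ t ∈ Icc (0:ℝ) x, |w' t| ≤ (∫ s in (0:ℝ)..x, κ₀ s * u s) + ε * M * π := by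
      intro t ht
      have htI : t ∈ Icc (0:ℝ) π := hIxsub ht
      rw [hw'rep t htI]
      have step1 : |∫ s in (0:ℝ)..t, h s| ≤ ∫ s in (0:ℝ)..t, |h s| :=
        intervalIntegral.abs_integral_le_integral_abs ht.1
      have step2 : (∫ s in (0:ℝ)..t, |h s|) ≤ ∫ s in (0:ℝ)..t, (κ₀ s * u s + ε * M) := by
        apply intervalIntegral.integral_mono_on ht.1 (hh_int t htI).abs
          ((hκ₀u_sub t htI).add intervalIntegrable_const)
        intro s hs
        exact hhb s ⟨hs.1, hs.2.trans htI.2⟩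
      have step3 : (∫ s in (0:ℝ)..t, (κ₀ s * u s + ε * M))
          = (∫ s in (0:ℝ)..t, κ₀ s * u s) + ε * M * t := by
        rw [intervalIntegral.integral_add (hκ₀u_sub t htI) intervalIntegrable_const,
          intervalIntegral.integral_const]
        simp [smul_eq_mul]
        ring
      have step4 : (∫ s in (0:ℝ)..t, κ₀ s * u s) ≤ ∫ s in (0:ℝ)..x, κ₀ s * u s := by
        have hadj := intervalIntegral.integral_add_adjacent_intervals
          (hκ₀u_sub t htI)
          ((hκ₀u_int.mono_set (by
            rw [uIcc_of_le ht.2, uIcc_of_le hπ.le]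
            exact Icc_subset_Icc htI.1 hx.2)) : IntervalIntegrable (fun s => κ₀ s * u s) volume t x)
        have hpos : 0 ≤ ∫ s in t..x, κ₀ s * u s :=
          intervalIntegral.integral_nonneg ht.2
            (fun s hs => hκ₀u0 s ⟨htI.1.trans hs.1, hs.2.trans hx.2⟩)
        linarith
      have step5 : ε * M * t ≤ ε * M * π := by
        apply mul_le_mul_of_nonneg_left htI.2 (by positivity)
      calc |∫ s in (0:ℝ)..t, h s| ≤ _ := step1
        _ ≤ _ := step2
        _ = _ := step3
        _ ≤ (∫ s in (0:ℝ)..x, κ₀ s * u s) + ε * M * π := by linarith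
    have hw'int : IntervalIntegrable (fun t => |w' t|) volume 0 x := by
      apply ContinuousOn.intervalIntegrable
      rw [uIcc_of_le hx.1]
      exact (hw'c.abs).mono hIxsub
    have c1 : u x = |∫ t in (0:ℝ)..x, w' t| := by rw [hudef]; simp only; rw [hwftc x hx]
    have c2 : |∫ t in (0:ℝ)..x, w' t| ≤ ∫ t in (0:ℝ)..x, |w' t| :=
      intervalIntegral.abs_integral_le_integral_abs hx.1
    have c3 : (∫ t in (0:ℝ)..x, |w' t|)
        ≤ ∫ t in (0:ℝ)..x, ((∫ s in (0:ℝ)..x, κ₀ s * u s) + ε * M * π) :=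
      intervalIntegral.integral_mono_on hx.1 hw'int intervalIntegrable_const hw'b
    have c4 : (∫ t in (0:ℝ)..x, ((∫ s in (0:ℝ)..x, κ₀ s * u s) + ε * M * π))
        = x * ((∫ s in (0:ℝ)..x, κ₀ s * u s) + ε * M * π) := by
      rw [intervalIntegral.integral_const]
      simp [smul_eq_mul]
    have c5 : (∫ t in (0:ℝ)..x, κ t * u t) = π * ∫ s in (0:ℝ)..x, κ₀ s * u s := by
      rw [← intervalIntegral.integral_const_mul]
      apply intervalIntegral.integral_congr
      intro s _
      simp only [hκdef]; ring
    rw [c5]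
    have hxπ : x ≤ π := hx.2
    have hx0 : 0 ≤ x := hx.1
    have hkey : (π - x) * ((∫ s in (0:ℝ)..x, κ₀ s * u s) + ε * M * π) ≥ 0 :=
      mul_nonneg (sub_nonneg.mpr hxπ) (add_nonneg hSnn (by positivity))
    nlinarith [c1, c2, c3, c4, hSnn, hkey]
  have final := hDp u (ε * π^2 * M) huc hu0 hbound
  intro x hx
  have := final x hx
  calc |φ lam x - φ μn x| = u x := rfl
    _ ≤ (ε * π^2 * M) * D := this
    _ = π^2 * M * D * ε := by ring


theorem statement12 (q : ℝ → ℝ) (hq : IntegrableOn q (Set.Icc (0 : ℝ) π))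
    (α β : ℝ) (hα : α ∈ Set.Ioo (0 : ℝ) π) (hβ : β ∈ Set.Ioo (0 : ℝ) π)
    (μn : ℝ) (hμn : IsEigenvalue q α β μn)
    (φ φ' : ℝ → ℝ → ℝ)
    (hsol : ∀ lam : ℝ, IsSol q lam (φ lam) (φ' lam))
    (h0 : ∀ lam : ℝ, φ lam 0 = Real.sin α)
    (h0' : ∀ lam : ℝ, φ' lam 0 = -Real.cos α)
    (ψ ψ' : ℝ → ℝ) (hψ : IsSol q μn ψ ψ')
    (hψπ : ψ π = Real.sin β) (hψ'π : ψ' π = -Real.cos β)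
    (c : ℝ) (hc : c ≠ 0) (heq : ∀ x ∈ Set.Icc (0 : ℝ) π, φ μn x = c * ψ x)
    (hdiff : DifferentiableAt ℝ
      (fun lam => φ lam π * Real.cos β + φ' lam π * Real.sin β) μn) :
    (∫ x in (0 : ℝ)..π, (φ μn x) ^ 2)
      = -c * deriv (fun lam => φ lam π * Real.cos β + φ' lam π * Real.sin β) μn := by
  have hπ := pi_pos
  have h0mem : (0:ℝ) ∈ Icc (0:ℝ) π := ⟨le_rfl, hπ.le⟩
  set Φ : ℝ → ℝ := fun lam => φ lam π * Real.cos β + φ' lam π * Real.sin β with hΦdef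
  set G : ℝ → ℝ := fun lam => ∫ x in (0:ℝ)..π, φ lam x * ψ x with hGdef
  -- boundary values of ψ at 0
  have hψ0 : Real.sin α = c * ψ 0 := by
    have := heq 0 h0mem; rwa [h0 μn] at this
  have hψ'0 : -Real.cos α = c * ψ' 0 := by
    have hd1 : HasDerivWithinAt (φ μn) (φ' μn 0) (Icc (0:ℝ) π) 0 :=
      ((hsol μn).1 0 h0mem).hasDerivWithinAt
    have hd2 : HasDerivWithinAt (fun x => c * ψ x) (c * ψ' 0) (Icc (0:ℝ) π) 0 :=
      ((hψ.1 0 h0mem).const_mul c).hasDerivWithinAt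
    have hd3 : HasDerivWithinAt (φ μn) (c * ψ' 0) (Icc (0:ℝ) π) 0 :=
      hd2.congr heq (heq 0 h0mem)
    have hud : UniqueDiffWithinAt ℝ (Icc (0:ℝ) π) 0 := uniqueDiffOn_Icc hπ 0 h0mem
    have e1 := hd1.derivWithin hud
    have e2 := hd3.derivWithin hud
    rw [e1] at e2
    rw [← h0' μn, e2]
  -- key identity
  have hkey : ∀ lam : ℝ, Φ lam = -(lam - μn) * G lam := by
    intro lam
    have hl := lagrange hq (hsol lam) hψ
    have b0 : φ lam 0 * ψ' 0 - φ' lam 0 * ψ 0 = 0 := by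
      rw [h0 lam, h0' lam]
      have e : c * (Real.sin α * ψ' 0 - -Real.cos α * ψ 0) = 0 := by
        have e1 : Real.sin α * (c * ψ' 0) - -Real.cos α * (c * ψ 0) = 0 := by
          rw [← hψ'0, ← hψ0]; ring
        nlinarith [e1]
      rcases mul_eq_zero.mp e with h | h
      · exact absurd h hc
      · exact h
    have bπ : φ lam π * ψ' π - φ' lam π * ψ π = -Φ lam := by
      rw [hψπ, hψ'π, hΦdef]; ring
    rw [b0, bπ] at hl
    have : (∫ x in (0:ℝ)..π, φ lam x * ψ x) = G lam := rfl
    rw [this] at hl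
    linarith
  -- Lipschitz continuity of G at μn
  obtain ⟨L, hL0, hLip⟩ := phi_lip hq hsol
    (fun lam => by rw [h0 lam, h0 μn]) (fun lam => by rw [h0' lam, h0' μn])
  obtain ⟨Mψ, hMψ⟩ := isCompact_Icc.exists_bound_of_continuousOn (sol_cont hψ)
  simp only [Real.norm_eq_abs] at hMψ
  have hMψ0 : 0 ≤ Mψ := le_trans (abs_nonneg _) (hMψ 0 h0mem)
  have hGcont : ∀ lam : ℝ, |lam - μn| ≤ 1 →
      |G lam - G μn| ≤ L * Mψ * |lam - μn| * π := by
    intro lam hlam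
    have hint : ∀ mu : ℝ, IntervalIntegrable (fun x => φ mu x * ψ x) volume 0 π := by
      intro mu
      apply ContinuousOn.intervalIntegrable
      rw [uIcc_of_le hπ.le]
      exact (sol_cont (hsol mu)).mul (sol_cont hψ)
    have e : G lam - G μn = ∫ x in (0:ℝ)..π, (φ lam x - φ μn x) * ψ x := by
      rw [hGdef]
      simp only
      rw [← intervalIntegral.integral_sub (hint lam) (hint μn)]
      apply intervalIntegral.integral_congr
      intro x _; ring
    rw [e]
    have hb := intervalIntegral.norm_integral_le_of_norm_le_const
      (C := L * Mψ * |lam - μn|) (f := fun x => (φ lam x - φ μn x) * ψ x)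
      (a := 0) (b := π) ?_
    · rw [Real.norm_eq_abs] at hb
      calc |∫ x in (0:ℝ)..π, (φ lam x - φ μn x) * ψ x|
          ≤ L * Mψ * |lam - μn| * |π - 0| := hb
        _ = L * Mψ * |lam - μn| * π := by rw [sub_zero, abs_of_pos hπ]
    · intro x hx
      rw [uIoc_of_le hπ.le] at hx
      have hxI : x ∈ Icc (0:ℝ) π := ⟨hx.1.le, hx.2⟩
      rw [Real.norm_eq_abs, abs_mul]
      have h1 := hLip lam hlam x hxI
      have h2 := hMψ x hxI
      have := mul_le_mul h1 h2 (abs_nonneg _) (by positivity)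
      calc |φ lam x - φ μn x| * |ψ x| ≤ L * |lam - μn| * Mψ := this
        _ = L * Mψ * |lam - μn| := by ring
  have hGtendsto : Filter.Tendsto G (nhds μn) (nhds (G μn)) := by
    rw [← tendsto_sub_nhds_zero_iff]
    apply squeeze_zero_norm' (a := fun lam => L * Mψ * |lam - μn| * π)
    · filter_upwards [Metric.ball_mem_nhds μn zero_lt_one] with lam hlam
      rw [Real.norm_eq_abs]
      exact hGcont lam (le_of_lt (by rwa [Metric.mem_ball, Real.dist_eq] at hlam))
    · have : Filter.Tendsto (fun lam : ℝ => L * Mψ * |lam - μn| * π) (nhds μn)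
          (nhds (L * Mψ * |μn - μn| * π)) := by
        apply Filter.Tendsto.mul_const
        apply Filter.Tendsto.mul tendsto_const_nhds
        exact ((continuous_id.sub continuous_const).abs).tendsto μn
      simpa using this
  -- derivative of Φ at μn
  have hΦμn : Φ μn = 0 := by
    have := hkey μn; simpa using this
  have hder : HasDerivAt Φ (-(G μn)) μn := by
    rw [hasDerivAt_iff_tendsto_slope]
    have h1 : Filter.Tendsto (fun lam => -(G lam)) (nhdsWithin μn {μn}ᶜ) (nhds (-(G μn))) :=
      (hGtendsto.neg).mono_left nhdsWithin_le_nhds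
    apply h1.congr'
    filter_upwards [self_mem_nhdsWithin] with lam hlam
    have hne : lam - μn ≠ 0 := sub_ne_zero.mpr hlam
    rw [slope_def_field, hkey lam, hΦμn]
    field_simp
    ring
  have hderiv : deriv Φ μn = -(G μn) := (hdiff.hasDerivAt.unique hder)
  rw [hderiv]
  -- conclude
  have hcG : c * G μn = ∫ x in (0:ℝ)..π, (φ μn x) ^ 2 := by
    rw [hGdef]
    simp only
    rw [← intervalIntegral.integral_const_mul]
    apply intervalIntegral.integral_congr
    intro x hx
    rw [uIcc_of_le hπ.le] at hx
    simp only
    rw [heq x hx]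
    ring
  rw [← hcG]
  ring
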